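/- Let E ⊆ ℝⁿ be a bounded Lebesgue measurable set. Suppose there is a dense set T of directions in S^{n-1} such that for every u ∈ T and for L^{n-1}-almost every x' in the orthogonal projection of E onto u^⊥, the one-dimensional section E ∩ (x' + ℝu) is equivalent (up to an L^1-null set) to a closed line segment. Then E is equal, up to an L^n-null set, to a convex body (a compact convex set with nonempty interior) whenever L^n(E) > 0. -/

import Mathlib

open MeasureTheory Metric Filter Set Topology ENNReal

namespace Stmt6Aux

variable {m : ℕ}

noncomputable def phi0 (m : ℕ) (p : ℝ × EuclideanSpace ℝ (Fin m)) :
    EuclideanSpace ℝ (Fin (m+1)) :=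
  ((MeasurableEquiv.toLp 2 (Fin (m+1) → ℝ)).symm).symm
    (Fin.cons p.1 ((MeasurableEquiv.toLp 2 (Fin m → ℝ)).symm p.2))

lemma phi0_apply_zero (p : ℝ × EuclideanSpace ℝ (Fin m)) : phi0 m p 0 = p.1 := rfl

lemma phi0_apply_succ (p : ℝ × EuclideanSpace ℝ (Fin m)) (j : Fin m) :
    phi0 m p j.succ = p.2 j := rfl

lemma phi0_measurePreserving :
    MeasurePreserving (phi0 m) (volume.prod volume) volume := by
  have h1 := (EuclideanSpace.volume_preserving_symm_measurableEquiv_toLp (Fin (m+1))).symm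
  have h2 := (volume_preserving_piFinSuccAbove (fun _ : Fin (m+1) => ℝ) 0).symm
  have h3 := (MeasurePreserving.id (volume : Measure ℝ)).prod
      (EuclideanSpace.volume_preserving_symm_measurableEquiv_toLp (Fin m))
  have hcomp := (h1.comp h2).comp h3
  have heq : phi0 m = (((MeasurableEquiv.toLp 2 (Fin (m+1) → ℝ)).symm).symm ∘
      (MeasurableEquiv.piFinSuccAbove (fun _ : Fin (m+1) => ℝ) 0).symm) ∘
      Prod.map id ((MeasurableEquiv.toLp 2 (Fin m → ℝ)).symm) := by
    funext p
    ext i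
    show (Fin.cons p.1 (fun j => p.2 j) : ∀ _ : Fin (m+1), ℝ) i
      = Fin.insertNth (α := fun _ : Fin (m+1) => ℝ) 0 p.1 (fun j => p.2 j) i
    induction i using Fin.cases with
    | zero => simp
    | succ j =>
      have h0 : Fin.succ j = Fin.succAbove 0 j := by simp [Fin.succAbove_zero]
      rw [Fin.cons_succ, h0, Fin.insertNth_apply_succAbove]
  exact heq ▸ hcomp

lemma phi0_dist_sq (p q : ℝ × EuclideanSpace ℝ (Fin m)) :
    dist (phi0 m p) (phi0 m q) ^ 2 = dist p.1 q.1 ^ 2 + dist p.2 q.2 ^ 2 := by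
  rw [EuclideanSpace.dist_eq, Real.sq_sqrt (by positivity), Fin.sum_univ_succ]
  simp only [phi0_apply_zero, phi0_apply_succ]
  congr 1
  rw [EuclideanSpace.dist_eq, Real.sq_sqrt (by positivity)]

lemma phi0_eq_smul_add (s : ℝ) (z : EuclideanSpace ℝ (Fin m)) :
    phi0 m (s, z) = s • EuclideanSpace.single (0 : Fin (m+1)) (1:ℝ) + phi0 m (0, z) := by
  ext i
  have : (s • EuclideanSpace.single (0 : Fin (m+1)) (1:ℝ) + phi0 m (0, z)) i
      = s * (EuclideanSpace.single (0 : Fin (m+1)) (1:ℝ) i) + phi0 m (0, z) i := rfl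
  rw [this]
  induction i using Fin.cases with
  | zero =>
    rw [phi0_apply_zero, phi0_apply_zero]
    simp [EuclideanSpace.single_apply]
  | succ j =>
    rw [phi0_apply_succ, phi0_apply_succ]
    simp [EuclideanSpace.single_apply, (Fin.succ_ne_zero j)]
variable {m : ℕ}

lemma exists_rot {N : ℕ} (x y : EuclideanSpace ℝ (Fin N)) (h : ‖x‖ = ‖y‖) :
    ∃ e : EuclideanSpace ℝ (Fin N) ≃ₗᵢ[ℝ] EuclideanSpace ℝ (Fin N), e x = y := by
  by_cases hxy : x = y
  · exact ⟨LinearIsometryEquiv.refl ℝ _, by rw [hxy]; rfl⟩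
  · exact ⟨Submodule.reflection (Submodule.span ℝ {x - y})ᗮ, Submodule.reflection_sub h⟩

lemma norm_single_one : ‖EuclideanSpace.single (0 : Fin (m+1)) (1:ℝ)‖ = 1 := by
  rw [EuclideanSpace.norm_single]; norm_num

lemma volume_le_hausdorff {s : Set (EuclideanSpace ℝ (Fin m))} (hs : MeasurableSet s) :
    volume s ≤ μH[(m : ℝ)] s := by
  classical
  have hg : MeasurePreserving ((MeasurableEquiv.toLp 2 (Fin m → ℝ)).symm).symm
      (volume : Measure (Fin m → ℝ)) volume :=
    (EuclideanSpace.volume_preserving_symm_measurableEquiv_toLp (Fin m)).symm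
  have h1 : volume s = volume (((MeasurableEquiv.toLp 2 (Fin m → ℝ)).symm).symm ⁻¹' s) :=
    (hg.measure_preimage hs.nullMeasurableSet).symm
  have h2 : (((MeasurableEquiv.toLp 2 (Fin m → ℝ)).symm).symm ⁻¹' s : Set (Fin m → ℝ))
      = ((MeasurableEquiv.toLp 2 (Fin m → ℝ)).symm) '' s := by
    rw [MeasurableEquiv.image_eq_preimage_symm]
  have h3 : (volume : Measure (Fin m → ℝ)) = μH[(m:ℝ)] := by
    have := (hausdorffMeasure_pi_real (ι := Fin m)).symm
    simpa using this
  have hlip : LipschitzWith 1 ((MeasurableEquiv.toLp 2 (Fin m → ℝ)).symm) :=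
    PiLp.lipschitzWith_ofLp 2 (fun _ : Fin m => ℝ)
  have h4 : μH[(m:ℝ)] (((MeasurableEquiv.toLp 2 (Fin m → ℝ)).symm) '' s) ≤ μH[(m:ℝ)] s := by
    simpa using hlip.hausdorffMeasure_image_le (by positivity) s
  calc volume s = volume (((MeasurableEquiv.toLp 2 (Fin m → ℝ)).symm).symm ⁻¹' s) := h1
    _ = μH[(m:ℝ)] (((MeasurableEquiv.toLp 2 (Fin m → ℝ)).symm) '' s) := by rw [h2, h3]
    _ ≤ μH[(m:ℝ)] s := h4

noncomputable def u0 (m : ℕ) : EuclideanSpace ℝ (Fin (m+1)) :=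
  EuclideanSpace.single (0 : Fin (m+1)) (1:ℝ)

noncomputable def Phi (e : EuclideanSpace ℝ (Fin (m+1)) ≃ₗᵢ[ℝ] EuclideanSpace ℝ (Fin (m+1)))
    (p : ℝ × EuclideanSpace ℝ (Fin m)) : EuclideanSpace ℝ (Fin (m+1)) :=
  e (phi0 m p)

variable (e : EuclideanSpace ℝ (Fin (m+1)) ≃ₗᵢ[ℝ] EuclideanSpace ℝ (Fin (m+1)))

lemma Phi_measurePreserving : MeasurePreserving (Phi e) (volume.prod volume) volume :=
  (e.measurePreserving).comp phi0_measurePreserving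

lemma Phi_dist_sq (p q : ℝ × EuclideanSpace ℝ (Fin m)) :
    dist (Phi e p) (Phi e q) ^ 2 = dist p.1 q.1 ^ 2 + dist p.2 q.2 ^ 2 := by
  rw [Phi, Phi, e.dist_map]; exact phi0_dist_sq p q

lemma Phi_eq (s : ℝ) (z : EuclideanSpace ℝ (Fin m)) :
    Phi e (s, z) = Phi e (0, z) + s • e (u0 m) := by
  rw [Phi, Phi, phi0_eq_smul_add, map_add, _root_.map_smul]; exact add_comm _ _

lemma Phi_inner_zero (z : EuclideanSpace ℝ (Fin m)) :
    (inner ℝ (Phi e (0, z)) (e (u0 m)) : ℝ) = 0 := by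
  rw [Phi, e.inner_map_map, u0, EuclideanSpace.inner_single_right]
  simp [phi0_apply_zero]

lemma Phi_surj_hyperplane (x : EuclideanSpace ℝ (Fin (m+1)))
    (hx : (inner ℝ x (e (u0 m)) : ℝ) = 0) : ∃ z, Phi e (0, z) = x := by
  set y := e.symm x with hy
  have hy0 : y 0 = 0 := by
    have h1 : (inner ℝ y (u0 m) : ℝ) = 0 := by
      rw [← e.inner_map_map, e.apply_symm_apply]
      exact hx
    rw [u0, EuclideanSpace.inner_single_right] at h1
    simpa using h1
  refine ⟨(WithLp.toLp 2 (fun j : Fin m => y j.succ) : EuclideanSpace ℝ (Fin m)), ?_⟩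
  have h2 : phi0 m (0, (WithLp.toLp 2 (fun j : Fin m => y j.succ) : EuclideanSpace ℝ (Fin m))) = y := by
    ext i
    induction i using Fin.cases with
    | zero => rw [phi0_apply_zero, hy0]
    | succ j => rw [phi0_apply_succ]
  rw [Phi, h2, e.apply_symm_apply]

lemma Phi_surj (x : EuclideanSpace ℝ (Fin (m+1))) : ∃ p, Phi e p = x := by
  set y := e.symm x with hy
  refine ⟨(y 0, (WithLp.toLp 2 (fun j : Fin m => y j.succ) : EuclideanSpace ℝ (Fin m))), ?_⟩
  have h2 : phi0 m ((y 0), (WithLp.toLp 2 (fun j : Fin m => y j.succ) : EuclideanSpace ℝ (Fin m))) = y := by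
    ext i
    induction i using Fin.cases with
    | zero => rw [phi0_apply_zero]
    | succ j => rw [phi0_apply_succ]
  rw [Phi, h2, e.apply_symm_apply]

lemma Phi_isometry_base : Isometry (fun z : EuclideanSpace ℝ (Fin m) => Phi e (0, z)) := by
  apply Isometry.of_dist_eq
  intro z z'
  have h := Phi_dist_sq e (0, z) (0, z')
  simp only [dist_self] at h
  have h2 : dist (Phi e (0,z)) (Phi e (0,z')) ^ 2 = dist z z' ^ 2 := by rw [h]; ring
  calc dist (Phi e (0,z)) (Phi e (0,z')) = √(dist (Phi e (0,z)) (Phi e (0,z')) ^ 2) :=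
        (Real.sqrt_sq dist_nonneg).symm
    _ = √(dist z z' ^ 2) := by rw [h2]
    _ = dist z z' := Real.sqrt_sq dist_nonneg

lemma ae_transfer (P : EuclideanSpace ℝ (Fin (m+1)) → Prop)
    (h : ∀ᵐ x' ∂((μH[(m : ℝ)] : Measure (EuclideanSpace ℝ (Fin (m+1)))).restrict
        {x | (inner ℝ x (e (u0 m)) : ℝ) = 0}), P x') :
    ∀ᵐ z ∂(volume : Measure (EuclideanSpace ℝ (Fin m))), P (Phi e (0, z)) := by
  have h0 := ae_iff.mp h
  obtain ⟨N, hsub, hNm, hN0⟩ := exists_measurable_superset_of_null h0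
  rw [Measure.restrict_apply hNm] at hN0
  set j := fun z : EuclideanSpace ℝ (Fin m) => Phi e (0, z) with hj
  have hiso : Isometry j := Phi_isometry_base e
  have himg : j '' (j ⁻¹' N) ⊆ N ∩ {x | (inner ℝ x (e (u0 m)) : ℝ) = 0} := by
    rintro _ ⟨z, hz, rfl⟩
    exact ⟨hz, Phi_inner_zero e z⟩
  have h5 : μH[(m:ℝ)] (j ⁻¹' N) = μH[(m:ℝ)] (j '' (j ⁻¹' N)) :=
    (hiso.hausdorffMeasure_image (Or.inl (by positivity)) _).symm
  have h6 : volume (j ⁻¹' N) = 0 := by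
    refine le_antisymm ?_ (zero_le)
    calc volume (j ⁻¹' N) ≤ μH[(m:ℝ)] (j ⁻¹' N) :=
          volume_le_hausdorff (hNm.preimage hiso.continuous.measurable)
      _ = μH[(m:ℝ)] (j '' (j ⁻¹' N)) := h5
      _ ≤ μH[(m:ℝ)] (N ∩ {x | (inner ℝ x (e (u0 m)) : ℝ) = 0}) := measure_mono himg
      _ = 0 := hN0
  rw [ae_iff]
  exact measure_mono_null (fun z hz => hsub hz) h6


lemma sq_le_iff {x ρ : ℝ} (hx : 0 ≤ x) (hρ : 0 ≤ ρ) : x ≤ ρ ↔ x^2 ≤ ρ^2 := by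
  constructor <;> intro h <;> nlinarith

lemma density_defect {α : Type*} [MetricSpace α] [MeasurableSpace α] [BorelSpace α]
    [ProperSpace α] (μ : Measure α) [IsFiniteMeasureOnCompacts μ] [μ.IsOpenPosMeasure]
    {E : Set α} (hE : MeasurableSet E) {x : α}
    (hx : Tendsto (fun r => μ (E ∩ closedBall x r) / μ (closedBall x r)) (𝓝[>] 0) (𝓝 1))
    {δ : ℝ≥0∞} (hδ : 0 < δ) :
    ∀ᶠ r in 𝓝[>] (0:ℝ), μ (closedBall x r \ E) ≤ δ * μ (closedBall x r) := by
  have h := (ENNReal.tendsto_nhds one_ne_top).mp hx δ hδ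
  filter_upwards [h, self_mem_nhdsWithin] with r hr hr0
  have hr0' : (0:ℝ) < r := hr0
  have hB0 : μ (closedBall x r) ≠ 0 := (measure_closedBall_pos μ x hr0').ne'
  have hBt : μ (closedBall x r) ≠ ⊤ := (measure_closedBall_lt_top).ne
  have hlow : 1 - δ ≤ μ (E ∩ closedBall x r) / μ (closedBall x r) := hr.1
  have h2 : (1 - δ) * μ (closedBall x r) ≤ μ (E ∩ closedBall x r) :=
    (ENNReal.le_div_iff_mul_le (Or.inl hB0) (Or.inl hBt)).mp hlow
  have h3 : μ (closedBall x r \ E) = μ (closedBall x r) - μ (E ∩ closedBall x r) := by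
    rw [← diff_inter_self_eq_diff]
    refine measure_diff inter_subset_right (hE.inter measurableSet_closedBall).nullMeasurableSet ?_
    exact ((measure_mono inter_subset_right).trans_lt measure_closedBall_lt_top).ne
  rw [h3, tsub_le_iff_right]
  calc μ (closedBall x r) = 1 * μ (closedBall x r) := (one_mul _).symm
    _ ≤ ((1 - δ) + δ) * μ (closedBall x r) := by
        refine mul_le_mul_left ?_ _
        exact le_tsub_add
    _ = (1-δ) * μ (closedBall x r) + δ * μ (closedBall x r) := by rw [add_mul]
    _ ≤ μ (E ∩ closedBall x r) + δ * μ (closedBall x r) := add_le_add_left h2 _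
    _ = δ * μ (closedBall x r) + μ (E ∩ closedBall x r) := add_comm _ _

lemma tendsto_three_mul : Tendsto (fun r : ℝ => 3*r) (𝓝[>] (0:ℝ)) (𝓝[>] (0:ℝ)) := by
  apply tendsto_nhdsWithin_of_tendsto_nhds_of_eventually_within
  · have h : Tendsto (fun r : ℝ => 3*r) (𝓝 (0:ℝ)) (𝓝 (3*0)) :=
      (continuous_const.mul continuous_id).tendsto 0
    rw [mul_zero] at h
    exact h.mono_left nhdsWithin_le_nhds
  · filter_upwards [self_mem_nhdsWithin] with r hr
    exact mul_pos (by norm_num : (0:ℝ) < 3) hr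

lemma measurable_section_vol {A : Set (ℝ × EuclideanSpace ℝ (Fin m))} (hA : MeasurableSet A)
    {I : Set ℝ} (hI : MeasurableSet I) :
    Measurable fun z : EuclideanSpace ℝ (Fin m) => volume ({s | (s,z) ∈ A} ∩ I) := by
  have h : ∀ z, {s | (s,z) ∈ A} ∩ I = (fun s => (s,z)) ⁻¹' (A ∩ (I ×ˢ univ)) := by
    intro z; ext s
    simp [and_comm]
  simp_rw [h]
  exact measurable_measure_prodMk_right (hA.inter (hI.prod MeasurableSet.univ))

lemma measurableSet_badset {A : Set (ℝ × EuclideanSpace ℝ (Fin m))} (hA : MeasurableSet A)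
    {I : Set ℝ} (hI : MeasurableSet I) (ζ : EuclideanSpace ℝ (Fin m)) (r : ℝ) :
    MeasurableSet {z | z ∈ closedBall ζ r ∧ volume ({s | (s,z) ∈ A} ∩ I) = 0} := by
  have : {z | z ∈ closedBall ζ r ∧ volume ({s | (s,z) ∈ A} ∩ I) = 0}
      = closedBall ζ r ∩ ((fun z => volume ({s | (s,z) ∈ A} ∩ I)) ⁻¹' {0}) := rfl
  rw [this]
  exact measurableSet_closedBall.inter
    ((measurable_section_vol hA hI) (measurableSet_singleton 0))


lemma badset_bound (E : Set (EuclideanSpace ℝ (Fin (m+1)))) (hE : MeasurableSet E)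
    (t0 : ℝ) (ζ : EuclideanSpace ℝ (Fin m)) {r : ℝ} (hr : 0 < r)
    (x : EuclideanSpace ℝ (Fin (m+1))) (hx : dist (Phi e (t0, ζ)) x ≤ r) :
    ENNReal.ofReal (3*r) *
      volume {z | z ∈ closedBall ζ r ∧
        volume ({s | (s,z) ∈ Phi e ⁻¹' E} ∩ Icc (t0 - 2*r) (t0 + 2*r)) = 0}
      ≤ volume (closedBall x (3*r) \ E) := by
  set A := Phi e ⁻¹' E with hA_def
  have hA : MeasurableSet A := hE.preimage (Phi_measurePreserving e).measurable
  set Bad := {z | z ∈ closedBall ζ r ∧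
      volume ({s | (s,z) ∈ A} ∩ Icc (t0-2*r) (t0+2*r)) = 0} with hBad_def
  have hBadm : MeasurableSet Bad := measurableSet_badset hA measurableSet_Icc ζ r
  set S := (Icc (t0 - 3/2*r) (t0 + 3/2*r)) ×ˢ Bad with hS_def
  have hSm : MeasurableSet S := measurableSet_Icc.prod hBadm
  have h1 : (volume.prod volume) S = ENNReal.ofReal (3*r) * volume Bad := by
    rw [hS_def, Measure.prod_prod, Real.volume_Icc]
    congr 2
    ring
  have h2 : (volume.prod volume) (S ∩ A) = 0 := by
    rw [Measure.prod_apply_symm (hSm.inter hA)]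
    have hzero : ∀ z, volume ((fun s => (s,z)) ⁻¹' (S ∩ A)) = 0 := by
      intro z
      by_cases hzB : z ∈ Bad
      · have hpre : (fun s => (s,z)) ⁻¹' (S ∩ A)
            ⊆ {s | (s,z) ∈ A} ∩ Icc (t0-2*r) (t0+2*r) := by
          rintro s ⟨hsS, hsA⟩
          refine ⟨hsA, Icc_subset_Icc (by linarith) (by linarith) hsS.1⟩
        exact measure_mono_null hpre hzB.2
      · have hpre : (fun s => (s,z)) ⁻¹' (S ∩ A) = ∅ := by
          ext s
          simp only [mem_preimage, mem_inter_iff, mem_empty_iff_false, iff_false, not_and]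
          intro hsS
          exact absurd hsS.2 hzB
        rw [hpre]; exact measure_empty
    simp only [hzero]
    exact lintegral_zero
  have h3 : S ⊆ Phi e ⁻¹' (closedBall (Phi e (t0,ζ)) (2*r)) := by
    rintro ⟨s,z⟩ ⟨hs, hz⟩
    have hz1 : dist z ζ ≤ r := mem_closedBall.mp hz.1
    have hs1 : dist s t0 ≤ 3/2*r := by
      rw [Real.dist_eq, abs_le]
      exact ⟨by linarith [hs.1], by linarith [hs.2]⟩
    simp only [mem_preimage, mem_closedBall]
    rw [sq_le_iff dist_nonneg (by linarith)]
    rw [Phi_dist_sq]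
    have h0 : (0:ℝ) ≤ dist s t0 := dist_nonneg
    have h0' : (0:ℝ) ≤ dist z ζ := dist_nonneg
    nlinarith
  have h4 : closedBall (Phi e (t0,ζ)) (2*r) ⊆ closedBall x (3*r) :=
    closedBall_subset_closedBall' (by linarith)
  calc ENNReal.ofReal (3*r) * volume Bad = (volume.prod volume) S := h1.symm
    _ = (volume.prod volume) (S ∩ A) + (volume.prod volume) (S \ A) :=
        (measure_inter_add_diff S hA).symm
    _ = (volume.prod volume) (S \ A) := by rw [h2, zero_add]
    _ ≤ (volume.prod volume) (Phi e ⁻¹' (closedBall x (3*r) \ E)) := by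
        refine measure_mono ?_
        rintro p ⟨hpS, hpA⟩
        rw [mem_preimage, mem_diff]
        exact ⟨h4 (h3 hpS), hpA⟩
    _ = volume (closedBall x (3*r) \ E) :=
        (Phi_measurePreserving e).measure_preimage
          ((measurableSet_closedBall.diff hE)).nullMeasurableSet


set_option maxHeartbeats 800000 in
lemma density_convex (E : Set (EuclideanSpace ℝ (Fin (m+1)))) (hE : MeasurableSet E)
    (T : Set (EuclideanSpace ℝ (Fin (m+1)))) (hT : T ⊆ sphere 0 1)
    (hdense : sphere (0 : EuclideanSpace ℝ (Fin (m+1))) 1 ⊆ closure T)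
    (hsec : ∀ u ∈ T, ∀ᵐ x' ∂((μH[(m : ℝ)] : Measure (EuclideanSpace ℝ (Fin (m+1)))).restrict
        {x | (inner ℝ x u : ℝ) = 0}),
        ∃ a b : ℝ, volume (symmDiff {s : ℝ | x' + s • u ∈ E} (Set.Icc a b)) = 0) :
    Convex ℝ {x | Tendsto (fun r => volume (E ∩ closedBall x r) / volume (closedBall x r))
      (𝓝[>] 0) (𝓝 1)} := by
  intro x hx y hy a b ha hb hab
  by_cases ha0 : a = 0
  · subst ha0; rw [zero_add] at hab; subst hab
    simpa using hy
  by_cases hb0 : b = 0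
  · subst hb0; rw [add_zero] at hab; subst hab
    simpa using hx
  by_cases hxy : x = y
  · subst hxy
    have : a • x + b • x = x := Convex.combo_self hab x
    rw [this]; exact hx
  have ha' : 0 < a := lt_of_le_of_ne ha (Ne.symm ha0)
  have hb' : 0 < b := lt_of_le_of_ne hb (Ne.symm hb0)
  set M := a • x + b • y with hM_def
  simp only [mem_setOf_eq] at hx hy ⊢
  -- suffices: eventual smallness of the defect
  suffices hmain : ∀ ε : ℝ≥0∞, 0 < ε → ∀ᶠ r in 𝓝[>] (0:ℝ),
      volume (closedBall M r \ E) ≤ ε * volume (closedBall M r) by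
    rw [ENNReal.tendsto_nhds one_ne_top]
    intro ε hε
    filter_upwards [hmain ε hε, self_mem_nhdsWithin] with r hr hr0
    have hr0' : (0:ℝ) < r := hr0
    have hB0 : volume (closedBall M r) ≠ 0 := (measure_closedBall_pos volume M hr0').ne'
    have hBt : volume (closedBall M r) ≠ ⊤ := measure_closedBall_lt_top.ne
    constructor
    · -- 1 - ε ≤ ratio
      rw [ENNReal.le_div_iff_mul_le (Or.inl hB0) (Or.inl hBt)]
      have hsplit : volume (closedBall M r) ≤
          volume (E ∩ closedBall M r) + ε * volume (closedBall M r) := by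
        calc volume (closedBall M r)
            ≤ volume (E ∩ closedBall M r) + volume (closedBall M r \ E) := by
              refine (measure_mono ?_).trans (measure_union_le _ _)
              intro p hp
              by_cases hpE : p ∈ E
              · exact Or.inl ⟨hpE, hp⟩
              · exact Or.inr ⟨hp, hpE⟩
          _ ≤ volume (E ∩ closedBall M r) + ε * volume (closedBall M r) :=
              add_le_add_right hr _
      calc (1 - ε) * volume (closedBall M r)
          = volume (closedBall M r) - ε * volume (closedBall M r) := by
            rw [ENNReal.sub_mul (fun _ _ => hBt), one_mul]
        _ ≤ (volume (E ∩ closedBall M r) + ε * volume (closedBall M r))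
              - ε * volume (closedBall M r) := tsub_le_tsub_right hsplit _
        _ ≤ volume (E ∩ closedBall M r) := tsub_le_iff_right.mpr (le_refl _)
    · calc volume (E ∩ closedBall M r) / volume (closedBall M r)
          ≤ volume (closedBall M r) / volume (closedBall M r) :=
            ENNReal.div_le_div_right (measure_mono inter_subset_right) _
        _ = 1 := ENNReal.div_self hB0 hBt
        _ ≤ 1 + ε := le_self_add
  -- main estimate
  intro ε hε
  set W := ‖y - x‖ with hW_def
  have hW : 0 < W := by
    rw [hW_def, norm_pos_iff, sub_ne_zero]
    exact fun h => hxy h.symm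
  set wh := W⁻¹ • (y - x) with hwh_def
  have hwh : ‖wh‖ = 1 := by
    rw [hwh_def, norm_smul, norm_inv, Real.norm_eq_abs, abs_of_pos hW, inv_mul_cancel₀ hW.ne']
  set L1 := b * W with hL1_def
  set L2 := a * W with hL2_def
  have hL1 : 0 < L1 := mul_pos hb' hW
  have hL2 : 0 < L2 := mul_pos ha' hW
  have hb1 : b ≤ 1 := by linarith
  have ha1 : a ≤ 1 := by linarith
  have hL1W : L1 ≤ W := by rw [hL1_def]; nlinarith
  have hL2W : L2 ≤ W := by rw [hL2_def]; nlinarith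
  have hbW : (b * W) * W⁻¹ = b := by field_simp
  have haW : (a * W) * W⁻¹ = a := by field_simp
  have hxM : M - L1 • wh = x := by
    rw [hL1_def, hwh_def, smul_smul, hbW, hM_def]
    have h : a • x + b • y - b • (y - x) = (a + b) • x := by module
    rw [h, hab, one_smul]
  have hyM : M + L2 • wh = y := by
    rw [hL2_def, hwh_def, smul_smul, haW, hM_def]
    have h : a • x + b • y + a • (y - x) = (a + b) • y := by module
    rw [h, hab, one_smul]
  set L := min L1 L2 with hL_def
  have hL : 0 < L := lt_min hL1 hL2
  set δ := ε / (2 * ENNReal.ofReal (3^(m+1))) with hδ_def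
  have h3pos : (0:ℝ) < 3^(m+1) := by positivity
  have hdent : (2 * ENNReal.ofReal ((3:ℝ)^(m+1))) ≠ ⊤ :=
    ENNReal.mul_ne_top (by norm_num) ENNReal.ofReal_ne_top
  have hδ : 0 < δ := ENNReal.div_pos hε.ne' hdent
  have hevx := tendsto_three_mul.eventually (density_defect volume hE hx hδ)
  have hevy := tendsto_three_mul.eventually (density_defect volume hE hy hδ)
  have hevL : ∀ᶠ r in 𝓝[>] (0:ℝ), r ≤ L/3 := by
    have hmem : Ioc (0:ℝ) (L/3) ∈ 𝓝[>] (0:ℝ) :=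
      Ioc_mem_nhdsGT_of_mem ⟨le_refl _, by positivity⟩
    filter_upwards [hmem] with r hr
    exact hr.2
  filter_upwards [hevx, hevy, hevL, self_mem_nhdsWithin] with r hrx hry hrL hr0
  have hr0' : (0:ℝ) < r := hr0
  have hrL1 : 3*r ≤ L1 := le_trans (by linarith) (min_le_left L1 L2)
  have hrL2 : 3*r ≤ L2 := le_trans (by linarith) (min_le_right L1 L2)
  have hwhs : wh ∈ sphere (0 : EuclideanSpace ℝ (Fin (m+1))) 1 := by
    rw [mem_sphere_zero_iff_norm]; exact hwh
  have hrW : 0 < r / (2*W) := by positivity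
  obtain ⟨u, huT, hdu⟩ := Metric.mem_closure_iff.mp (hdense hwhs) _ hrW
  have hu1 : ‖u‖ = 1 := mem_sphere_zero_iff_norm.mp (hT huT)
  obtain ⟨e, he⟩ := exists_rot (u0 m) u (by rw [u0, norm_single_one, hu1])
  obtain ⟨⟨c, ζ⟩, hMc⟩ := Phi_surj e M
  set A := Phi e ⁻¹' E with hA_def
  have hA : MeasurableSet A := hE.preimage (Phi_measurePreserving e).measurable
  have hxt : Phi e (c - L1, ζ) = M - L1 • u := by
    rw [Phi_eq, he, ← hMc, Phi_eq e c ζ, he]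
    module
  have hyt : Phi e (c + L2, ζ) = M + L2 • u := by
    rw [Phi_eq, he, ← hMc, Phi_eq e c ζ, he]
    module
  have hdux : dist (Phi e (c - L1, ζ)) x ≤ r := by
    rw [hxt, ← hxM, dist_eq_norm]
    have h : (M - L1 • u) - (M - L1 • wh) = L1 • (wh - u) := by module
    rw [h, norm_smul, Real.norm_eq_abs, abs_of_pos hL1, ← dist_eq_norm]
    calc L1 * dist wh u ≤ W * (r/(2*W)) :=
          mul_le_mul hL1W hdu.le dist_nonneg hW.le
      _ = r/2 := by field_simp
      _ ≤ r := by linarith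
  have hduy : dist (Phi e (c + L2, ζ)) y ≤ r := by
    rw [hyt, ← hyM, dist_eq_norm]
    have h : (M + L2 • u) - (M + L2 • wh) = L2 • (u - wh) := by module
    rw [h, norm_smul, Real.norm_eq_abs, abs_of_pos hL2, ← dist_eq_norm, dist_comm u wh]
    calc L2 * dist wh u ≤ W * (r/(2*W)) :=
          mul_le_mul hL2W hdu.le dist_nonneg hW.le
      _ = r/2 := by field_simp
      _ ≤ r := by linarith
  set BadX := {z | z ∈ closedBall ζ r ∧
      volume ({s | (s,z) ∈ A} ∩ Icc ((c - L1) - 2*r) ((c - L1) + 2*r)) = 0} with hBadX_def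
  set BadY := {z | z ∈ closedBall ζ r ∧
      volume ({s | (s,z) ∈ A} ∩ Icc ((c + L2) - 2*r) ((c + L2) + 2*r)) = 0} with hBadY_def
  have hBadXm : MeasurableSet BadX := measurableSet_badset hA measurableSet_Icc ζ r
  have hBadYm : MeasurableSet BadY := measurableSet_badset hA measurableSet_Icc ζ r
  have hbx := badset_bound e E hE (c - L1) ζ hr0' x hdux
  have hby := badset_bound e E hE (c + L2) ζ hr0' y hduy
  rw [← hBadX_def] at hbx
  rw [← hBadY_def] at hby
  have hsec_u := hsec u huT
  rw [← he] at hsec_u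
  have hae := ae_transfer e (fun x' => ∃ a' b' : ℝ,
    volume (symmDiff {s : ℝ | x' + s • e (u0 m) ∈ E} (Icc a' b')) = 0) hsec_u
  have hgood : ∀ᵐ z ∂(volume : Measure (EuclideanSpace ℝ (Fin m))),
      (z ∈ closedBall ζ r → z ∉ BadX → z ∉ BadY →
        volume (Icc (c - r) (c + r) \ {s | (s,z) ∈ A}) = 0) := by
    filter_upwards [hae] with z hz hzball hzX hzY
    obtain ⟨a', b', hab'⟩ := hz
    have hsect : {s : ℝ | Phi e (0,z) + s • e (u0 m) ∈ E} = {s | (s,z) ∈ A} := by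
      ext s
      rw [mem_setOf_eq, mem_setOf_eq, hA_def, mem_preimage, ← Phi_eq e s z]
    rw [hsect] at hab'
    have heqm : {s | (s,z) ∈ A} =ᵐ[(volume : Measure ℝ)] Icc a' b' :=
      measure_symmDiff_eq_zero_iff.mp hab'
    have hvX : volume ({s | (s,z) ∈ A} ∩ Icc ((c - L1) - 2*r) ((c - L1) + 2*r)) ≠ 0 :=
      fun h => hzX ⟨hzball, h⟩
    have hvY : volume ({s | (s,z) ∈ A} ∩ Icc ((c + L2) - 2*r) ((c + L2) + 2*r)) ≠ 0 :=
      fun h => hzY ⟨hzball, h⟩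
    have hiX : volume (Icc a' b' ∩ Icc ((c - L1) - 2*r) ((c - L1) + 2*r)) ≠ 0 := by
      exact fun h => hvX ((measure_congr (heqm.inter (Filter.EventuallyEq.refl _ _))).trans h)
    have hiY : volume (Icc a' b' ∩ Icc ((c + L2) - 2*r) ((c + L2) + 2*r)) ≠ 0 := by
      exact fun h => hvY ((measure_congr (heqm.inter (Filter.EventuallyEq.refl _ _))).trans h)
    rw [Icc_inter_Icc, Real.volume_Icc, Ne, ENNReal.ofReal_eq_zero, not_le, sub_pos] at hiX hiY
    have ha'lt : a' < (c - L1) + 2*r :=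
      lt_of_le_of_lt (le_max_left _ _) (lt_of_lt_of_le hiX (min_le_right _ _))
    have hb'gt : (c + L2) - 2*r < b' :=
      lt_of_le_of_lt (le_max_right _ _) (lt_of_lt_of_le hiY (min_le_left _ _))
    have hsub : Icc (c - r) (c + r) ⊆ Icc a' b' :=
      Icc_subset_Icc (by linarith) (by linarith)
    have hd1 : Icc (c - r) (c + r) \ {s | (s,z) ∈ A} ⊆
        (Icc (c - r) (c + r) \ Icc a' b') ∪ (Icc a' b' \ {s | (s,z) ∈ A}) := by
      intro s hs
      by_cases hsi : s ∈ Icc a' b'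
      · exact Or.inr ⟨hsi, hs.2⟩
      · exact Or.inl ⟨hs.1, hsi⟩
    refine measure_mono_null hd1 (measure_union_null ?_ ?_)
    · rw [diff_eq_empty.mpr hsub]
      exact measure_empty
    · refine measure_mono_null ?_ hab'
      rw [Set.symmDiff_def]
      exact fun s hs => Set.mem_union_right _ hs
  set Box := Icc (c - r) (c + r) ×ˢ closedBall ζ r with hBox_def
  have hBoxm : MeasurableSet Box := measurableSet_Icc.prod measurableSet_closedBall
  have hsubBox : Phi e ⁻¹' (closedBall M r) ⊆ Box := by
    rintro ⟨s, z⟩ hp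
    rw [mem_preimage, mem_closedBall, ← hMc] at hp
    have hsq := (sq_le_iff dist_nonneg hr0'.le).mp hp
    rw [Phi_dist_sq] at hsq
    dsimp only at hsq
    have hd1 : (0:ℝ) ≤ dist s c := dist_nonneg
    have hd2 : (0:ℝ) ≤ dist z ζ := dist_nonneg
    have h1 : dist s c ≤ r :=
      (sq_le_iff dist_nonneg hr0'.le).mpr (by nlinarith [sq_nonneg (dist z ζ)])
    have h2 : dist z ζ ≤ r :=
      (sq_le_iff dist_nonneg hr0'.le).mpr (by nlinarith [sq_nonneg (dist s c)])
    rw [Real.dist_eq, abs_le] at h1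
    exact ⟨mem_Icc.mpr ⟨by linarith [h1.1], by linarith [h1.2]⟩, mem_closedBall.mpr h2⟩
  have hkey3 : volume (closedBall M r \ E) ≤
      ENNReal.ofReal (2*r) * (volume BadX + volume BadY) := by
    have e1 : volume (closedBall M r \ E)
        = (volume.prod volume) (Phi e ⁻¹' (closedBall M r \ E)) :=
      ((Phi_measurePreserving e).measure_preimage
        ((measurableSet_closedBall.diff hE)).nullMeasurableSet).symm
    rw [e1]
    have e2 : Phi e ⁻¹' (closedBall M r \ E) ⊆ Box \ A := by
      intro p hp
      rw [mem_preimage, mem_diff] at hp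
      exact ⟨hsubBox hp.1, hp.2⟩
    refine le_trans (measure_mono e2) ?_
    rw [Measure.prod_apply_symm (hBoxm.diff hA)]
    have hbound : ∀ᵐ z ∂(volume : Measure (EuclideanSpace ℝ (Fin m))),
        volume ((fun s => (s,z)) ⁻¹' (Box \ A)) ≤
          (BadX ∪ BadY).indicator (fun _ => ENNReal.ofReal (2*r)) z := by
      filter_upwards [hgood] with z hz
      by_cases hzb : z ∈ closedBall ζ r
      · by_cases hzbad : z ∈ BadX ∪ BadY
        · rw [indicator_of_mem hzbad]
          refine le_trans (measure_mono (fun s hs => hs.1.1)) ?_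
          rw [Real.volume_Icc]
          exact ENNReal.ofReal_le_ofReal (by linarith)
        · rw [indicator_of_notMem hzbad]
          have h0 := hz hzb (fun h => hzbad (Or.inl h)) (fun h => hzbad (Or.inr h))
          have hss : (fun s => (s,z)) ⁻¹' (Box \ A) ⊆
              Icc (c - r) (c + r) \ {s | (s,z) ∈ A} :=
            fun s hs => ⟨hs.1.1, hs.2⟩
          rw [measure_mono_null hss h0]
      · have hempty : (fun s => (s,z)) ⁻¹' (Box \ A) = ∅ := by
          ext s
          simp only [mem_preimage, mem_diff, mem_empty_iff_false, iff_false, not_and]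
          intro hB
          exact absurd hB.2 hzb
        rw [hempty, measure_empty]
        exact zero_le
    refine le_trans (lintegral_mono_ae hbound) ?_
    rw [lintegral_indicator (hBadXm.union hBadYm), setLIntegral_const]
    exact mul_le_mul_right (measure_union_le _ _) _
  have hvol : ∀ p : EuclideanSpace ℝ (Fin (m+1)), ∀ ρ : ℝ, 0 ≤ ρ →
      volume (closedBall p ρ) = ENNReal.ofReal (ρ^(m+1)) *
        volume (ball (0 : EuclideanSpace ℝ (Fin (m+1))) 1) := by
    intro p ρ hρ
    rw [Measure.addHaar_closedBall volume p hρ, finrank_euclideanSpace_fin]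
  have hvx3 : volume (closedBall x (3*r)) =
      ENNReal.ofReal ((3:ℝ)^(m+1)) * volume (closedBall M r) := by
    rw [hvol x (3*r) (by linarith), hvol M r hr0'.le, mul_pow,
      ENNReal.ofReal_mul (by positivity), mul_assoc]
  have hvy3 : volume (closedBall y (3*r)) =
      ENNReal.ofReal ((3:ℝ)^(m+1)) * volume (closedBall M r) := by
    rw [hvol y (3*r) (by linarith), hvol M r hr0'.le, mul_pow,
      ENNReal.ofReal_mul (by positivity), mul_assoc]
  have hchain : ENNReal.ofReal (3*r) * volume (closedBall M r \ E) ≤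
      ENNReal.ofReal (3*r) * (ε * volume (closedBall M r)) := by
    calc ENNReal.ofReal (3*r) * volume (closedBall M r \ E)
        ≤ ENNReal.ofReal (3*r) * (ENNReal.ofReal (2*r) * (volume BadX + volume BadY)) :=
          mul_le_mul_right hkey3 _
      _ = ENNReal.ofReal (2*r) * (ENNReal.ofReal (3*r) * volume BadX
            + ENNReal.ofReal (3*r) * volume BadY) := by ring
      _ ≤ ENNReal.ofReal (2*r) * (δ * volume (closedBall x (3*r))
            + δ * volume (closedBall y (3*r))) :=
          mul_le_mul_right (add_le_add (le_trans hbx hrx) (le_trans hby hry)) _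
      _ = ENNReal.ofReal (2*r) * ((2 * ENNReal.ofReal ((3:ℝ)^(m+1)) * δ)
            * volume (closedBall M r)) := by
          rw [hvx3, hvy3]; ring
      _ ≤ ENNReal.ofReal (3*r) * ((2 * ENNReal.ofReal ((3:ℝ)^(m+1)) * δ)
            * volume (closedBall M r)) :=
          mul_le_mul_left (ENNReal.ofReal_le_ofReal (by linarith)) _
      _ ≤ ENNReal.ofReal (3*r) * (ε * volume (closedBall M r)) := by
          refine mul_le_mul_right (mul_le_mul_left ?_ _) _
          rw [hδ_def]
          exact ENNReal.mul_div_le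
  have h3r0 : ENNReal.ofReal (3*r) ≠ 0 := by
    rw [Ne, ENNReal.ofReal_eq_zero, not_le]
    linarith
  exact (ENNReal.mul_le_mul_iff_right h3r0 ENNReal.ofReal_ne_top).mp hchain


end Stmt6Aux

open Stmt6Aux

theorem stmt6 {n : ℕ} (E : Set (EuclideanSpace ℝ (Fin n))) (hE : MeasurableSet E)
    (hb : Bornology.IsBounded E)
    (T : Set (EuclideanSpace ℝ (Fin n)))
    (hT : T ⊆ Metric.sphere (0 : EuclideanSpace ℝ (Fin n)) 1)
    (hdense : Metric.sphere (0 : EuclideanSpace ℝ (Fin n)) 1 ⊆ closure T)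
    (hsec : ∀ u ∈ T,
      ∀ᵐ x' ∂((μH[((n : ℝ) - 1)] :
          Measure (EuclideanSpace ℝ (Fin n))).restrict
            {x : EuclideanSpace ℝ (Fin n) | (inner ℝ x u : ℝ) = 0}),
        ∃ a b : ℝ,
          volume (symmDiff {s : ℝ | x' + s • u ∈ E} (Set.Icc a b)) = 0)
    (hpos : 0 < volume E) :
    ∃ K : Set (EuclideanSpace ℝ (Fin n)),
      IsCompact K ∧ Convex ℝ K ∧ (interior K).Nonempty ∧
        volume (symmDiff E K) = 0 := by
  obtain _ | m := n
  · -- n = 0 : the space is a single point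
    rw [volume_euclideanSpace_eq_dirac] at hpos
    have h0E : (0 : EuclideanSpace ℝ (Fin 0)) ∈ E := by
      by_contra h
      rw [Measure.dirac_apply' _ hE, indicator_of_notMem h] at hpos
      exact lt_irrefl _ hpos
    refine ⟨Set.univ, ?_, convex_univ, by simp, ?_⟩
    · have hfin : Finite (EuclideanSpace ℝ (Fin 0)) := by
        have : Subsingleton (EuclideanSpace ℝ (Fin 0)) := ⟨fun a b => by ext i; exact i.elim0⟩
        infer_instance
      exact Set.finite_univ.isCompact
    · have hsd : symmDiff E Set.univ = Eᶜ := by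
        rw [Set.symmDiff_def]
        ext p
        simp
      rw [hsd, volume_euclideanSpace_eq_dirac, Measure.dirac_apply' _ hE.compl,
        indicator_of_notMem (by simpa using h0E)]
  · -- n = m + 1
    have hcast : ((m + 1 : ℕ) : ℝ) - 1 = (m : ℝ) := by push_cast; ring
    simp only [hcast] at hsec
    set D := {x : EuclideanSpace ℝ (Fin (m+1)) |
      Tendsto (fun r => volume (E ∩ closedBall x r) / volume (closedBall x r))
        (𝓝[>] 0) (𝓝 1)} with hD_def
    have hconv : Convex ℝ D := density_convex E hE T hT hdense hsec
    have hdens := Besicovitch.ae_tendsto_measure_inter_div_of_measurableSet volume hE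
    have hED1 : volume (E \ D) = 0 := by
      have h : ∀ᵐ x' ∂(volume : Measure (EuclideanSpace ℝ (Fin (m+1)))), x' ∉ E \ D := by
        filter_upwards [hdens] with x' hx'
        rintro ⟨hxE, hxD⟩
        apply hxD
        have h1 : E.indicator (1 : EuclideanSpace ℝ (Fin (m+1)) → ℝ≥0∞) x' = 1 := by
          rw [indicator_of_mem hxE]; rfl
        rw [h1] at hx'
        exact hx'
      have := ae_iff.mp h; simp only [not_not] at this; exact this
    have hED2 : volume (D \ E) = 0 := by
      have h : ∀ᵐ x' ∂(volume : Measure (EuclideanSpace ℝ (Fin (m+1)))), x' ∉ D \ E := by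
        filter_upwards [hdens] with x' hx'
        rintro ⟨hxD, hxE⟩
        have h1 : E.indicator (1 : EuclideanSpace ℝ (Fin (m+1)) → ℝ≥0∞) x' = 0 :=
          indicator_of_notMem hxE _
        rw [h1] at hx'
        exact one_ne_zero (tendsto_nhds_unique hxD hx')
      have := ae_iff.mp h; simp only [not_not] at this; exact this
    have hDpos : 0 < volume (E ∩ D) := by
      rcases eq_or_lt_of_le (zero_le : 0 ≤ volume (E ∩ D)) with h | h
      · exfalso
        have : volume E ≤ volume (E ∩ D) + volume (E \ D) := by
          refine (measure_mono ?_).trans (measure_union_le _ _)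
          intro p hp
          by_cases hpD : p ∈ D
          · exact Or.inl ⟨hp, hpD⟩
          · exact Or.inr ⟨hp, hpD⟩
        rw [← h, hED1, add_zero] at this
        exact absurd (le_antisymm this (zero_le)) hpos.ne'
      · exact h
    set K := closure D with hK_def
    have hKconv : Convex ℝ K := hconv.closure
    have hDsub : D ⊆ closure E := by
      intro z hz
      by_contra hzc
      rw [Metric.mem_closure_iff] at hzc
      push_neg at hzc
      obtain ⟨ρ, hρ, hfar⟩ := hzc
      have hev : ∀ᶠ r in 𝓝[>] (0:ℝ),
          volume (E ∩ closedBall z r) / volume (closedBall z r) = 0 := by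
        filter_upwards [Ioc_mem_nhdsGT_of_mem ⟨le_refl (0:ℝ), half_pos hρ⟩] with r hr
        have hemp : E ∩ closedBall z r = ∅ := by
          ext p
          simp only [mem_inter_iff, mem_closedBall, mem_empty_iff_false, iff_false, not_and]
          intro hpE hpb
          have := hfar p hpE
          rw [dist_comm] at hpb
          linarith [hr.2]
        rw [hemp, measure_empty, ENNReal.zero_div]
      have h0 : Tendsto (fun r => volume (E ∩ closedBall z r) / volume (closedBall z r))
          (𝓝[>] (0:ℝ)) (𝓝 0) :=
        Tendsto.congr' (hev.mono fun r h => h.symm) tendsto_const_nhds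
      exact one_ne_zero (tendsto_nhds_unique hz h0)
    have hKb : Bornology.IsBounded K := ((hb.closure.subset hDsub).closure)
    have hKcomp : IsCompact K := Metric.isCompact_of_isClosed_isBounded isClosed_closure hKb
    have hKpos : 0 < volume K :=
      lt_of_lt_of_le hDpos (measure_mono (inter_subset_right.trans subset_closure))
    have hKint : (interior K).Nonempty := by
      rw [hKconv.interior_nonempty_iff_affineSpan_eq_top]
      by_contra h
      have h0 : volume ((affineSpan ℝ K : AffineSubspace ℝ (EuclideanSpace ℝ (Fin (m+1)))) :
          Set (EuclideanSpace ℝ (Fin (m+1)))) = 0 :=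
        Measure.addHaar_affineSubspace volume _ h
      exact absurd (le_antisymm ((measure_mono (subset_affineSpan ℝ K)).trans h0.le)
        (zero_le)) hKpos.ne'
    have hfr : volume (frontier D) = 0 := hconv.addHaar_frontier volume
    refine ⟨K, hKcomp, hKconv, hKint, ?_⟩
    rw [Set.symmDiff_def]
    refine measure_union_null ?_ ?_
    · exact measure_mono_null
        (show E \ K ⊆ E \ D from fun p hp => ⟨hp.1, fun hD => hp.2 (subset_closure hD)⟩) hED1
    · have hsplit : K \ E ⊆ (closure D \ D) ∪ (D \ E) := by
        intro p hp
        by_cases hpD : p ∈ D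
        · exact Or.inr ⟨hpD, hp.2⟩
        · exact Or.inl ⟨hp.1, hpD⟩
      refine measure_mono_null hsplit (measure_union_null ?_ hED2)
      refine measure_mono_null ?_ hfr
      rw [← closure_diff_interior]
      exact fun p hp => ⟨hp.1, fun hint => hp.2 (interior_subset hint)⟩
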